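/- Let (K,|·|) be a complete ultrametric field, n ≥ 1, and U ⊆ K^n a locally closed, locally cartesian subset. Then every compact subset C of U is contained in a compact, locally cartesian subset L with C ⊆ L ⊆ U. -/

import Mathlib

/-- A subset of `K^n` is *cartesian* if it is a product `V₁ × ⋯ × Vₙ` of subsets of `K`
none of which has an isolated point. -/
def IsCartesianSet {K : Type*} [TopologicalSpace K] {n : ℕ} (V : Set (Fin n → K)) : Prop :=
  ∃ W : Fin n → Set K, V = Set.univ.pi W ∧ ∀ i, Preperfect (W i)

/-- A subset of `K^n` is *locally cartesian* if each of its points has a relatively open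
neighbourhood in it which is cartesian. -/
def IsLocallyCartesian {K : Type*} [TopologicalSpace K] {n : ℕ} (U : Set (Fin n → K)) : Prop :=
  ∀ x ∈ U, ∃ V : Set (Fin n → K),
    x ∈ V ∧ V ⊆ U ∧ (∃ O, IsOpen O ∧ V = U ∩ O) ∧ IsCartesianSet V

/-- A subset `U` of a topological space is *locally closed* if for each `x ∈ U` and each
neighbourhood `W` of `x` in `U` there is a neighbourhood `V ⊆ W` of `x` in `U` which is
closed in the ambient space. -/
def IsLocallyClosedSet {α : Type*} [TopologicalSpace α] (U : Set α) : Prop :=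
  ∀ x ∈ U, ∀ W ∈ nhdsWithin x U, W ⊆ U →
    ∃ V ∈ nhdsWithin x U, V ⊆ W ∧ IsClosed V


open Metric Set Filter

instance IsUltrametricDist.pi {ι : Type*} [Fintype ι] {α : ι → Type*}
    [∀ i, PseudoMetricSpace (α i)] [∀ i, IsUltrametricDist (α i)] :
    IsUltrametricDist (∀ i, α i) := by
  refine ⟨fun x y z => ?_⟩
  refine (dist_pi_le_iff (le_trans dist_nonneg (le_max_left _ _))).2 fun i => ?_
  exact (IsUltrametricDist.dist_triangle_max (x i) (y i) (z i)).trans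
    (max_le_max (dist_le_pi_dist x y i) (dist_le_pi_dist y z i))

theorem exists_compact_preperfect_hull {X : Type*} [MetricSpace X] [IsUltrametricDist X]
    [CompleteSpace X] {Z A : Set X} (hZc : IsClosed Z) (hZp : Preperfect Z)
    (hA : IsCompact A) (hAZ : A ⊆ Z) :
    ∃ M, A ⊆ M ∧ M ⊆ Z ∧ IsCompact M ∧ Preperfect M := by
  classical
  have hhalf : ∀ k : ℕ, (0:ℝ) < (1/2)^k := fun k => by positivity
  -- choice of close distinct points in Z
  have hg : ∀ z : Z, ∀ k : ℕ, ∃ w, w ∈ Z ∧ w ≠ (z:X) ∧ dist w (z:X) < (1/2)^k := by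
    intro z k
    obtain ⟨y, ⟨hy1, hy2⟩, hy3⟩ := accPt_iff_nhds.1 (hZp z z.2)
      (ball (z:X) ((1/2)^k)) (ball_mem_nhds _ (hhalf k))
    exact ⟨y, hy2, hy3, by simpa [mem_ball] using hy1⟩
  choose g hgZ hgne hgdist using hg
  set G : X → ℕ → X := fun z k => if hz : z ∈ Z then g ⟨z, hz⟩ k else z with hGdef
  have hGZ : ∀ z ∈ Z, ∀ k, G z k ∈ Z := fun z hz k => by simp only [hGdef, dif_pos hz]; exact hgZ ⟨z, hz⟩ k
  have hGne : ∀ z ∈ Z, ∀ k, G z k ≠ z := fun z hz k => by simp only [hGdef, dif_pos hz]; exact hgne ⟨z, hz⟩ k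
  have hGdist : ∀ z ∈ Z, ∀ k, dist (G z k) z < (1/2)^k := fun z hz k => by
    simp only [hGdef, dif_pos hz]; exact hgdist ⟨z, hz⟩ k
  -- finite nets of A
  have hN : ∀ k : ℕ, ∃ s : Finset X, (∀ a ∈ s, a ∈ A) ∧ A ⊆ ⋃ a ∈ s, ball a ((1/2)^k) :=
    fun k => hA.elim_nhds_subcover (fun a => ball a ((1/2)^k))
      (fun a _ => ball_mem_nhds _ (hhalf k))
  choose N hNA hNcov using hN
  -- the increasing family of finite sets
  set F : ℕ → Set X := fun k => Nat.rec (↑(N 0))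
    (fun k Fk => (Fk ∪ (fun z => G z (k+1)) '' Fk) ∪ ↑(N (k+1))) k with hFdef
  have hF0 : F 0 = ↑(N 0) := rfl
  have hFsucc : ∀ k, F (k+1) = (F k ∪ (fun z => G z (k+1)) '' F k) ∪ ↑(N (k+1)) := fun k => rfl
  have hFfin : ∀ k, (F k).Finite := by
    intro k; induction k with
    | zero => exact (N 0).finite_toSet
    | succ k ih => rw [hFsucc]; exact ((ih.union (ih.image _)).union (N (k+1)).finite_toSet)
  have hFZ : ∀ k, F k ⊆ Z := by
    intro k; induction k with
    | zero => exact fun a ha => hAZ (hNA 0 a ha)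
    | succ k ih =>
      rw [hFsucc]
      refine union_subset (union_subset ih ?_) (fun a ha => hAZ (hNA (k+1) a ha))
      rintro _ ⟨z, hz, rfl⟩; exact hGZ z (ih hz) (k+1)
  have hFmono : Monotone F := monotone_nat_of_le_succ (fun k => by
    rw [hFsucc]; exact subset_union_left.trans' subset_union_left)
  have hNF : ∀ k, ↑(N k) ⊆ F k := by
    intro k; cases k with
    | zero => exact subset_rfl
    | succ k => rw [hFsucc]; exact subset_union_right
  have hGF : ∀ k, ∀ z ∈ F k, G z (k+1) ∈ F (k+1) := by
    intro k z hz; rw [hFsucc]; exact Or.inl (Or.inr ⟨z, hz, rfl⟩)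
  -- approximation of later stages by stage k up to (1/2)^(k+1)
  have approx : ∀ k m, ∀ y ∈ F (k + m), ∃ z, (z ∈ F k ∨ z ∈ A) ∧ dist y z ≤ (1/2)^(k+1) := by
    intro k m
    induction m with
    | zero => exact fun y hy => ⟨y, Or.inl hy, by simp [(hhalf (k+1)).le]⟩
    | succ m ih =>
      intro y hy
      rw [show k + (m+1) = (k+m) + 1 from rfl, hFsucc] at hy
      rcases hy with (hy | ⟨z', hz', rfl⟩) | hy
      · exact ih y hy
      · obtain ⟨z, hz, hdz⟩ := ih z' hz'
        refine ⟨z, hz, le_trans (IsUltrametricDist.dist_triangle_max _ z' z) (max_le ?_ hdz)⟩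
        refine le_trans (hGdist z' (hFZ _ hz') (k+m+1)).le ?_
        exact pow_le_pow_of_le_one (by norm_num) (by norm_num) (by omega)
      · exact ⟨y, Or.inr (hNA _ y hy), by simp [(hhalf (k+1)).le]⟩
  set S : Set X := ⋃ k, F k with hSdef
  have hSZ : S ⊆ Z := iUnion_subset hFZ
  have hFS : ∀ k, F k ⊆ S := fun k => subset_iUnion F k
  refine ⟨closure S, ?_, hZc.closure_subset_iff.2 hSZ, ?_, ?_⟩
  · -- A ⊆ closure S
    intro a ha
    rw [Metric.mem_closure_iff]
    intro ε hε
    obtain ⟨k, hk⟩ := exists_pow_lt_of_lt_one hε (by norm_num : (1:ℝ)/2 < 1)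
    obtain ⟨b, hb, hab⟩ := mem_iUnion₂.1 (hNcov k ha)
    exact ⟨b, hFS k (hNF k hb), lt_trans (by simpa [mem_ball, dist_comm] using hab) hk⟩
  · -- compact
    refine TotallyBounded.isCompact_of_isClosed (TotallyBounded.closure ?_) isClosed_closure
    rw [Metric.totallyBounded_iff]
    intro ε hε
    obtain ⟨k, hk⟩ := exists_pow_lt_of_lt_one hε (by norm_num : (1:ℝ)/2 < 1)
    refine ⟨F k ∪ ↑(N k), (hFfin k).union (N k).finite_toSet, ?_⟩
    intro y hy
    obtain ⟨m, hym⟩ := mem_iUnion.1 hy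
    have hym' : y ∈ F (k + m) := hFmono (Nat.le_add_left m k) hym
    obtain ⟨z, hz, hdz⟩ := approx k m y hym'
    have hdz' : dist y z < ε := lt_of_le_of_lt (hdz.trans (pow_le_pow_of_le_one (by norm_num) (by norm_num) (Nat.le_succ k))) hk
    rcases hz with hz | hz
    · exact mem_biUnion (Or.inl hz) (by simpa [mem_ball] using hdz')
    · obtain ⟨b, hb, hzb⟩ := mem_iUnion₂.1 (hNcov k hz)
      refine mem_biUnion (Or.inr hb) ?_
      rw [mem_ball]
      refine lt_of_le_of_lt (IsUltrametricDist.dist_triangle_max y z b) (max_lt hdz' ?_)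
      exact lt_trans (by simpa [mem_ball, dist_comm] using hzb) hk
  · -- preperfect
    intro x hx
    rw [accPt_iff_nhds]
    intro V hV
    obtain ⟨ε, hε, hball⟩ := Metric.mem_nhds_iff.1 hV
    by_cases hxS : x ∈ S
    · obtain ⟨k, hk⟩ := mem_iUnion.1 hxS
      obtain ⟨j, hj⟩ := exists_pow_lt_of_lt_one hε (by norm_num : (1:ℝ)/2 < 1)
      set m := max k j with hm
      have hxm : x ∈ F m := hFmono (le_max_left k j) hk
      have hxZ : x ∈ Z := hFZ m hxm
      refine ⟨G x (m+1), ⟨hball ?_, subset_closure (hFS (m+1) (hGF m x hxm))⟩, hGne x hxZ (m+1)⟩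
      rw [mem_ball]
      refine lt_of_lt_of_le (hGdist x hxZ (m+1)) (le_trans ?_ hj.le)
      exact pow_le_pow_of_le_one (by norm_num) (by norm_num) (by omega)
    · obtain ⟨b, hb, hxb⟩ := Metric.mem_closure_iff.1 hx ε hε
      refine ⟨b, ⟨hball (by simpa [mem_ball, dist_comm] using hxb), subset_closure hb⟩, ?_⟩
      rintro rfl; exact hxS hb


open Metric Set Filter

theorem isClosed_factor {X : Type*} [TopologicalSpace X] {n : ℕ} {W : Fin n → Set X}
    (h : IsClosed (Set.univ.pi W)) {p : Fin n → X} (hp : p ∈ Set.univ.pi W) (i : Fin n) :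
    IsClosed (W i) := by
  classical
  have key : W i = (fun t => Function.update p i t) ⁻¹' (Set.univ.pi W) := by
    rw [Set.update_preimage_univ_pi (fun j _ => hp j (Set.mem_univ j))]
  rw [key]
  exact h.preimage (continuous_const.update i continuous_id)

theorem good_ball {K : Type*} [NontriviallyNormedField K] [IsUltrametricDist K]
    {n : ℕ} (U : Set (Fin n → K)) (hUlc : IsLocallyCartesian U) (hUcl : IsLocallyClosedSet U)
    (x : Fin n → K) (hx : x ∈ U) :
    ∃ r > 0, IsClosed (U ∩ closedBall x r) ∧
      ∃ W : Fin n → Set K, U ∩ closedBall x r = Set.univ.pi W ∧ ∀ i, Preperfect (W i) := by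
  obtain ⟨V, hxV, hVU, ⟨O, hO, hVO⟩, W0, hVW, hW0⟩ := hUlc x hx
  have hxO : x ∈ O := (hVO ▸ hxV).2
  have hVnhds : V ∈ nhdsWithin x U := by
    rw [hVO]; exact Filter.inter_mem self_mem_nhdsWithin
      (mem_nhdsWithin_of_mem_nhds (hO.mem_nhds hxO))
  obtain ⟨V', hV'nhds, hV'V, hV'closed⟩ := hUcl x hx V hVnhds hVU
  obtain ⟨O', hO', hxO', hO'V'⟩ := mem_nhdsWithin.1 hV'nhds
  obtain ⟨r, hr, hball⟩ := Metric.nhds_basis_closedBall.mem_iff.1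
    ((hO.inter hO').mem_nhds ⟨hxO, hxO'⟩)
  set B := closedBall x r with hB
  have hUB_V' : U ∩ B ⊆ V' := fun y hy =>
    hO'V' ⟨(hball hy.2).2, hy.1⟩
  have hUB_V : U ∩ B = V ∩ B := by
    apply Subset.antisymm
    · exact fun y hy => ⟨hV'V (hUB_V' hy), hy.2⟩
    · exact fun y hy => ⟨hVU hy.1, hy.2⟩
  have hUB_V'eq : U ∩ B = V' ∩ B := by
    apply Subset.antisymm
    · exact fun y hy => ⟨hUB_V' hy, hy.2⟩
    · exact fun y hy => ⟨hVU (hV'V hy.1), hy.2⟩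
  refine ⟨r, hr, ?_, fun i => W0 i ∩ closedBall (x i) r, ?_, ?_⟩
  · rw [hUB_V'eq]; exact hV'closed.inter Metric.isClosed_closedBall
  · rw [hUB_V, hVW, hB, closedBall_pi x hr.le, ← Set.pi_inter_distrib]
  · intro i
    show Preperfect (W0 i ∩ closedBall (x i) r)
    rw [Set.inter_comm]
    exact (hW0 i).open_inter (IsUltrametricDist.isOpen_closedBall (x i) hr.ne')


/-- **Compact locally cartesian hulls** (Lemma `verylast` (c)).
If `K` is a complete ultrametric field and `U ⊆ K^n` is locally closed and locally
cartesian, then every compact subset `C` of `U` is contained in a compact, locally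
cartesian subset `L` with `C ⊆ L ⊆ U`. -/
theorem compact_subset_compact_locallyCartesian
    {K : Type*} [NontriviallyNormedField K] [IsUltrametricDist K] [CompleteSpace K]
    (n : ℕ) (hn : 1 ≤ n) (U : Set (Fin n → K))
    (hUlc : IsLocallyCartesian U) (hUcl : IsLocallyClosedSet U)
    (C : Set (Fin n → K)) (hC : IsCompact C) (hCU : C ⊆ U) :
    ∃ L : Set (Fin n → K), C ⊆ L ∧ L ⊆ U ∧ IsCompact L ∧ IsLocallyCartesian L := by
  classical
  choose r hr hcl W hWeq hWperf using fun y : U => good_ball U hUlc hUcl y y.2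
  set B : U → Set (Fin n → K) := fun y => Metric.closedBall (y : Fin n → K) (r y) with hBdef
  have hBopen : ∀ y : U, IsOpen (B y) := fun y =>
    IsUltrametricDist.isOpen_closedBall _ (hr y).ne'
  have hBclosed : ∀ y : U, IsClosed (B y) := fun y => Metric.isClosed_closedBall
  have hmemB : ∀ y : U, (y : Fin n → K) ∈ B y := fun y => Metric.mem_closedBall_self (hr y).le
  obtain ⟨t, hcov⟩ := hC.elim_nhds_subcover' (fun c hc => B ⟨c, hCU hc⟩)
    (fun c hc => (hBopen _).mem_nhds (hmemB _))
  set ys : Set U := (fun c : C => (⟨(c : Fin n → K), hCU c.2⟩ : U)) '' ↑t with hysdef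
  have hysfin : ys.Finite := (t.finite_toSet).image _
  set 𝒮 : Set (Set (Fin n → K)) := B '' ys with h𝒮def
  have h𝒮fin : 𝒮.Finite := hysfin.image _
  have hcov' : ∀ c ∈ C, ∃ b ∈ 𝒮, c ∈ b := by
    intro c hc
    obtain ⟨x, hxt, hcx⟩ := Set.mem_iUnion₂.1 (hcov hc)
    exact ⟨B ⟨(x : Fin n → K), hCU x.2⟩, ⟨⟨(x : Fin n → K), hCU x.2⟩, ⟨x, hxt, rfl⟩, rfl⟩, hcx⟩
  set ℬ : Set (Set (Fin n → K)) := {b ∈ 𝒮 | ∀ b' ∈ 𝒮, b ⊆ b' → b = b'} with hℬdef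
  have hℬ𝒮 : ℬ ⊆ 𝒮 := fun b hb => hb.1
  have hℬfin : ℬ.Finite := h𝒮fin.subset hℬ𝒮
  have hmax : ∀ b ∈ 𝒮, ∃ m ∈ ℬ, b ⊆ m := by
    intro b hb
    obtain ⟨m, hm, hmmax⟩ := Set.Finite.exists_maximalFor id {c ∈ 𝒮 | b ⊆ c}
      (h𝒮fin.subset (fun c hc => hc.1)) ⟨b, hb, Set.Subset.rfl⟩
    exact ⟨m, ⟨hm.1, fun b' hb' hmb' => hmb'.antisymm (hmmax (show b' ∈ {c ∈ 𝒮 | b ⊆ c} from ⟨hb', hm.2.trans hmb'⟩) hmb')⟩, hm.2⟩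
  have hdisj : ∀ b ∈ ℬ, ∀ b' ∈ ℬ, b ≠ b' → Disjoint b b' := by
    intro b hb b' hb' hne
    obtain ⟨y, _, hby⟩ := hℬ𝒮 hb
    obtain ⟨y', _, hby'⟩ := hℬ𝒮 hb'
    rcases IsUltrametricDist.closedBall_subset_trichotomy
      (y : Fin n → K) (y' : Fin n → K) (r y) (r y') with h | h | h
    · exact absurd (hb.2 b' (hℬ𝒮 hb') (hby ▸ hby' ▸ h)) hne
    · exact absurd (hb'.2 b (hℬ𝒮 hb) (hby' ▸ hby ▸ h)).symm hne
    · rw [← hby, ← hby']; exact h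
  have hpiece : ∀ b ∈ ℬ, ∃ P : Set (Fin n → K),
      C ∩ b ⊆ P ∧ P ⊆ U ∩ b ∧ IsCompact P ∧ IsCartesianSet P := by
    intro b hb
    obtain ⟨y, _, rfl⟩ := hℬ𝒮 hb
    have hUB : U ∩ B y = Set.univ.pi (W y) := hWeq y
    have hUBc : IsClosed (U ∩ B y) := hcl y
    have hyUB : (y : Fin n → K) ∈ Set.univ.pi (W y) := hUB ▸ ⟨y.2, hmemB y⟩
    have hWc : ∀ i, IsClosed (W y i) := fun i => isClosed_factor (hUB ▸ hUBc) hyUB i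
    have hCb : IsCompact (C ∩ B y) := hC.inter_right (hBclosed y)
    have hAi : ∀ i, IsCompact ((fun f => f i) '' (C ∩ B y)) :=
      fun i => hCb.image (continuous_apply i)
    have hAiW : ∀ i, (fun f => f i) '' (C ∩ B y) ⊆ W y i := by
      rintro i _ ⟨c, hc, rfl⟩
      have hcW : c ∈ Set.univ.pi (W y) := hUB ▸ ⟨hCU hc.1, hc.2⟩
      exact hcW i (Set.mem_univ i)
    choose M hM1 hM2 hM3 hM4 using fun i =>
      exists_compact_preperfect_hull (hWc i) (hWperf y i) (hAi i) (hAiW i)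
    refine ⟨Set.univ.pi M, ?_, ?_, isCompact_univ_pi hM3, ⟨M, rfl, hM4⟩⟩
    · intro c hc i _
      exact hM1 i ⟨c, hc, rfl⟩
    · exact (Set.pi_mono fun i _ => hM2 i).trans hUB.symm.subset
  choose P hP1 hP2 hP3 hP4 using fun b : ℬ => hpiece b b.2
  haveI : Finite ℬ := hℬfin.to_subtype
  refine ⟨⋃ b : ℬ, P b, ?_, ?_, isCompact_iUnion hP3, ?_⟩
  · intro c hc
    obtain ⟨b0, hb0, hcb0⟩ := hcov' c hc
    obtain ⟨m, hm, hb0m⟩ := hmax b0 hb0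
    exact Set.mem_iUnion.2 ⟨⟨m, hm⟩, hP1 ⟨m, hm⟩ ⟨hc, hb0m hcb0⟩⟩
  · exact Set.iUnion_subset fun b => (hP2 b).trans Set.inter_subset_left
  · intro z hz
    obtain ⟨b, hzb⟩ := Set.mem_iUnion.1 hz
    refine ⟨P b, hzb, fun w hw => Set.mem_iUnion.2 ⟨b, hw⟩, ⟨(b : Set (Fin n → K)), ?_, ?_⟩,
      hP4 b⟩
    · obtain ⟨y, _, hby⟩ := hℬ𝒮 b.2
      exact hby ▸ hBopen y
    · apply Set.Subset.antisymm
      · exact Set.subset_inter (fun w hw => Set.mem_iUnion.2 ⟨b, hw⟩)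
          (fun w hw => ((hP2 b) hw).2)
      · rintro w ⟨hwL, hwb⟩
        obtain ⟨b', hwb'⟩ := Set.mem_iUnion.1 hwL
        by_cases hbb : b' = b
        · exact hbb ▸ hwb'
        · exact absurd hwb (Set.disjoint_left.1
            (hdisj (b' : Set _) b'.2 (b : Set _) b.2 (fun h => hbb (Subtype.ext h)))
            ((hP2 b' hwb').2))
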